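/- Let f, g : (0, λ₀] → ℝ be nonnegative functions such that ∫_0^Λ f(λ) dλ ≥ ∫_0^Λ g(λ) dλ for all Λ ∈ (0, λ₀]. Suppose f(λ) ~ a λ^r and g(λ) ~ b λ^q as λ → 0⁺ with a, b > 0. Then either r < q, or r = q and a ≥ b. -/

import Mathlib

open Filter Set intervalIntegral MeasureTheory

private lemma aux_neg_one_lt {f : ℝ → ℝ} {c r δ : ℝ} (hc : 0 < c) (hδ : 0 < δ)
    (hfi : MeasureTheory.IntegrableOn f (Set.Ioc 0 δ))
    (hbd : ∀ l ∈ Set.Ioc (0:ℝ) δ, c * l ^ r ≤ f l) : -1 < r := by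
  have hmeas : AEStronglyMeasurable (fun l : ℝ => c * l ^ r)
      (MeasureTheory.volume.restrict (Set.Ioc 0 δ)) := by
    apply ContinuousOn.aestronglyMeasurable _ measurableSet_Ioc
    intro x hx
    exact (continuousAt_const.mul
      (Real.continuousAt_rpow_const x r (Or.inl (ne_of_gt hx.1)))).continuousWithinAt
  have hint : MeasureTheory.IntegrableOn (fun l : ℝ => c * l ^ r) (Set.Ioc 0 δ) := by
    refine hfi.mono' hmeas ?_
    rw [MeasureTheory.ae_restrict_iff' measurableSet_Ioc]
    filter_upwards with l hl
    have h1 : 0 ≤ c * l ^ r := mul_nonneg hc.le (Real.rpow_nonneg hl.1.le r)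
    rw [Real.norm_eq_abs, abs_of_nonneg h1]
    exact hbd l hl
  have hint2 : MeasureTheory.IntegrableOn (fun l : ℝ => l ^ r) (Set.Ioc 0 δ) := by
    have h3 : MeasureTheory.IntegrableOn (fun l : ℝ => c⁻¹ * (c * l ^ r)) (Set.Ioc 0 δ) :=
      hint.const_mul c⁻¹
    refine h3.congr_fun (fun l _ => ?_) measurableSet_Ioc
    field_simp
  have := hint2.mono_set Set.Ioo_subset_Ioc_self
  exact (integrableOn_Ioo_rpow_iff hδ).mp this

/-- Asymptotic comparison: if `f, g ≥ 0` on `(0, lam0]`, `∫_0^Λ f ≥ ∫_0^Λ g` for every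
`Λ ∈ (0, lam0]`, and `f(λ) ~ a λ^r`, `g(λ) ~ b λ^q` as `λ → 0⁺` with `a, b > 0`, then
either `r < q`, or `r = q` and `a ≥ b`. -/
theorem asymptotic_comparison (lam0 : ℝ) (hlam0 : 0 < lam0)
    (f g : ℝ → ℝ)
    (hf0 : ∀ l ∈ Set.Ioc (0 : ℝ) lam0, 0 ≤ f l)
    (hg0 : ∀ l ∈ Set.Ioc (0 : ℝ) lam0, 0 ≤ g l)
    (hfint : ∀ Λ ∈ Set.Ioc (0 : ℝ) lam0, IntervalIntegrable f MeasureTheory.volume 0 Λ)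
    (hgint : ∀ Λ ∈ Set.Ioc (0 : ℝ) lam0, IntervalIntegrable g MeasureTheory.volume 0 Λ)
    (hint : ∀ Λ ∈ Set.Ioc (0 : ℝ) lam0, (∫ l in (0)..Λ, g l) ≤ ∫ l in (0)..Λ, f l)
    (a b r q : ℝ) (ha : 0 < a) (hb : 0 < b)
    (hfa : Tendsto (fun l => f l / l ^ r) (nhdsWithin 0 (Set.Ioi 0)) (nhds a))
    (hgb : Tendsto (fun l => g l / l ^ q) (nhdsWithin 0 (Set.Ioi 0)) (nhds b)) :
    r < q ∨ (r = q ∧ b ≤ a) := by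
  -- extract pointwise bounds from the limits
  have hub : ∀ ε > (0:ℝ), ∃ δ > (0:ℝ), ∀ l ∈ Set.Ioc (0:ℝ) δ, f l ≤ (a + ε) * l ^ r := by
    intro ε hε
    have h1 : ∀ᶠ l in nhdsWithin (0:ℝ) (Set.Ioi 0), |f l / l ^ r - a| < ε :=
      Metric.tendsto_nhds.mp hfa ε hε
    rw [eventually_iff, mem_nhdsGT_iff_exists_Ioc_subset] at h1
    obtain ⟨u, hu, hsub⟩ := h1
    refine ⟨u, hu, fun l hl => ?_⟩
    have hl' := hsub hl
    rw [Set.mem_setOf_eq] at hl'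
    have hlpos : 0 < l ^ r := Real.rpow_pos_of_pos hl.1 r
    have := (abs_lt.mp hl').2
    have h2 : f l / l ^ r < a + ε := by linarith
    calc f l = (f l / l ^ r) * l ^ r := by field_simp
    _ ≤ (a + ε) * l ^ r := by nlinarith
  have hlb : ∀ ε > (0:ℝ), ∃ δ > (0:ℝ), ∀ l ∈ Set.Ioc (0:ℝ) δ, (b - ε) * l ^ q ≤ g l := by
    intro ε hε
    have h1 : ∀ᶠ l in nhdsWithin (0:ℝ) (Set.Ioi 0), |g l / l ^ q - b| < ε :=
      Metric.tendsto_nhds.mp hgb ε hε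
    rw [eventually_iff, mem_nhdsGT_iff_exists_Ioc_subset] at h1
    obtain ⟨u, hu, hsub⟩ := h1
    refine ⟨u, hu, fun l hl => ?_⟩
    have hl' := hsub hl
    rw [Set.mem_setOf_eq] at hl'
    have hlpos : 0 < l ^ q := Real.rpow_pos_of_pos hl.1 q
    have := (abs_lt.mp hl').1
    have h2 : b - ε < g l / l ^ q := by linarith
    calc (b - ε) * l ^ q ≤ (g l / l ^ q) * l ^ q := by nlinarith
    _ = g l := by field_simp
  -- also a lower bound for f, to get -1 < r
  have hflb : ∃ δ > (0:ℝ), ∀ l ∈ Set.Ioc (0:ℝ) δ, (a/2) * l ^ r ≤ f l := by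
    have h1 : ∀ᶠ l in nhdsWithin (0:ℝ) (Set.Ioi 0), |f l / l ^ r - a| < a/2 :=
      Metric.tendsto_nhds.mp hfa (a/2) (by linarith)
    rw [eventually_iff, mem_nhdsGT_iff_exists_Ioc_subset] at h1
    obtain ⟨u, hu, hsub⟩ := h1
    refine ⟨u, hu, fun l hl => ?_⟩
    have hl' := hsub hl
    rw [Set.mem_setOf_eq] at hl'
    have hlpos : 0 < l ^ r := Real.rpow_pos_of_pos hl.1 r
    have := (abs_lt.mp hl').1
    have h2 : a/2 < f l / l ^ r := by linarith
    calc (a/2) * l ^ r ≤ (f l / l ^ r) * l ^ r := by nlinarith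
    _ = f l := by field_simp
  -- `-1 < r`
  have hr : -1 < r := by
    obtain ⟨δ, hδ, hδbd⟩ := hflb
    set δ' := min δ lam0 with hδ'def
    have hδ' : 0 < δ' := lt_min hδ hlam0
    refine aux_neg_one_lt (half_pos ha) hδ'
      ((hfint δ' ⟨hδ', min_le_right _ _⟩).1) (fun l hl => ?_)
    exact hδbd l ⟨hl.1, hl.2.trans (min_le_left _ _)⟩
  -- `-1 < q`
  have hq : -1 < q := by
    obtain ⟨δ, hδ, hδbd⟩ := hlb (b/2) (by linarith)
    set δ' := min δ lam0 with hδ'def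
    have hδ' : 0 < δ' := lt_min hδ hlam0
    refine aux_neg_one_lt (half_pos hb) hδ'
      ((hgint δ' ⟨hδ', min_le_right _ _⟩).1) (fun l hl => ?_)
    have := hδbd l ⟨hl.1, hl.2.trans (min_le_left _ _)⟩
    calc (b/2) * l ^ q = (b - b/2) * l ^ q := by ring_nf
    _ ≤ g l := this
  have hq1 : 0 < q + 1 := by linarith
  have hr1 : 0 < r + 1 := by linarith
  -- key eventual inequality
  have key : ∀ ε, 0 < ε → ε < b → ∀ᶠ Λ in nhdsWithin (0:ℝ) (Set.Ioi 0),
      (b - ε) * (Λ ^ (q+1) / (q+1)) ≤ (a + ε) * (Λ ^ (r+1) / (r+1)) := by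
    intro ε hε hεb
    obtain ⟨δ1, hδ1, hbd1⟩ := hub ε hε
    obtain ⟨δ2, hδ2, hbd2⟩ := hlb ε hε
    set δ := min (min δ1 δ2) lam0 with hδdef
    have hδ : 0 < δ := lt_min (lt_min hδ1 hδ2) hlam0
    have hmem : Set.Ioc (0:ℝ) δ ∈ nhdsWithin (0:ℝ) (Set.Ioi 0) :=
      Ioc_mem_nhdsGT_of_mem ⟨le_refl 0, hδ⟩
    filter_upwards [hmem] with Λ hΛ
    have hΛ0 : 0 < Λ := hΛ.1
    have hΛlam : Λ ≤ lam0 := hΛ.2.trans (min_le_right _ _)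
    have hΛδ1 : Λ ≤ δ1 := hΛ.2.trans ((min_le_left _ _).trans (min_le_left _ _))
    have hΛδ2 : Λ ≤ δ2 := hΛ.2.trans ((min_le_left _ _).trans (min_le_right _ _))
    have hgI : MeasureTheory.IntegrableOn g (Set.Ioc 0 Λ) := (hgint Λ ⟨hΛ0, hΛlam⟩).1
    have hfI : MeasureTheory.IntegrableOn f (Set.Ioc 0 Λ) := (hfint Λ ⟨hΛ0, hΛlam⟩).1
    have hqI : MeasureTheory.IntegrableOn (fun l : ℝ => (b - ε) * l ^ q) (Set.Ioc 0 Λ) :=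
      ((intervalIntegrable_rpow' hq (a := 0) (b := Λ)).1).const_mul _
    have hrI : MeasureTheory.IntegrableOn (fun l : ℝ => (a + ε) * l ^ r) (Set.Ioc 0 Λ) :=
      ((intervalIntegrable_rpow' hr (a := 0) (b := Λ)).1).const_mul _
    have step1 : (∫ l in Set.Ioc (0:ℝ) Λ, (b - ε) * l ^ q) ≤ ∫ l in Set.Ioc (0:ℝ) Λ, g l := by
      refine MeasureTheory.setIntegral_mono_on hqI hgI measurableSet_Ioc (fun l hl => ?_)
      exact hbd2 l ⟨hl.1, hl.2.trans hΛδ2⟩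
    have step3 : (∫ l in Set.Ioc (0:ℝ) Λ, f l) ≤ ∫ l in Set.Ioc (0:ℝ) Λ, (a + ε) * l ^ r := by
      refine MeasureTheory.setIntegral_mono_on hfI hrI measurableSet_Ioc (fun l hl => ?_)
      exact hbd1 l ⟨hl.1, hl.2.trans hΛδ1⟩
    have step2 := hint Λ ⟨hΛ0, hΛlam⟩
    rw [intervalIntegral.integral_of_le hΛ0.le, intervalIntegral.integral_of_le hΛ0.le] at step2
    have comp1 : (∫ l in Set.Ioc (0:ℝ) Λ, (b - ε) * l ^ q) = (b - ε) * (Λ ^ (q+1) / (q+1)) := by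
      rw [← intervalIntegral.integral_of_le hΛ0.le, intervalIntegral.integral_const_mul,
        integral_rpow (Or.inl hq), Real.zero_rpow (by linarith : q + 1 ≠ 0)]
      ring
    have comp2 : (∫ l in Set.Ioc (0:ℝ) Λ, (a + ε) * l ^ r) = (a + ε) * (Λ ^ (r+1) / (r+1)) := by
      rw [← intervalIntegral.integral_of_le hΛ0.le, intervalIntegral.integral_const_mul,
        integral_rpow (Or.inl hr), Real.zero_rpow (by linarith : r + 1 ≠ 0)]
      ring
    rw [← comp1, ← comp2]
    exact step1.trans (step2.trans step3)
  -- conclusion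
  by_contra hcon
  push_neg at hcon
  obtain ⟨hqr, himp⟩ := hcon
  rcases eq_or_lt_of_le hqr with heq | hlt
  · -- r = q, a < b
    have hab : a < b := himp heq.symm
    set ε := (b - a)/4 with hεdef
    have hε : 0 < ε := by simp only [hεdef]; linarith
    have hεb : ε < b := by simp only [hεdef]; linarith
    obtain ⟨Λ, hineq, hΛ0⟩ := ((key ε hε hεb).and self_mem_nhdsWithin).exists
    have hΛpos : (0:ℝ) < Λ := hΛ0
    rw [← heq] at hineq
    have hX : 0 < Λ ^ (q+1) / (q+1) := div_pos (Real.rpow_pos_of_pos hΛpos _) hq1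
    have hba : b - ε ≤ a + ε := by
      have h2 : (b - ε) * (Λ ^ (q+1) / (q+1)) ≤ (a + ε) * (Λ ^ (q+1) / (q+1)) := hineq
      exact le_of_mul_le_mul_right (by linarith) hX
    simp only [hεdef] at hba
    linarith
  · -- q < r
    set ε := b/2 with hεdef
    have hev := key ε (by simp [hεdef]; linarith) (by simp [hεdef]; linarith)
    have hev2 : ∀ᶠ Λ in nhdsWithin (0:ℝ) (Set.Ioi 0),
        (b - ε)/(q+1) ≤ (a + ε)/(r+1) * Λ ^ (r - q) := by
      filter_upwards [hev, self_mem_nhdsWithin] with Λ hcomp hΛpos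
      have hΛ0 : (0:ℝ) < Λ := hΛpos
      have hq1pos : 0 < Λ ^ (q+1) := Real.rpow_pos_of_pos hΛ0 _
      have hsplit : Λ ^ (r+1) = Λ ^ (q+1) * Λ ^ (r-q) := by
        rw [← Real.rpow_add hΛ0]; ring_nf
      rw [hsplit] at hcomp
      have h2 : (b-ε)/(q+1) * Λ ^ (q+1) ≤ ((a+ε)/(r+1) * Λ ^ (r-q)) * Λ ^ (q+1) := by
        calc (b-ε)/(q+1) * Λ ^ (q+1) = (b-ε) * (Λ ^ (q+1)/(q+1)) := by ring
        _ ≤ (a+ε) * (Λ ^ (q+1) * Λ ^ (r-q)/(r+1)) := hcomp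
        _ = ((a+ε)/(r+1) * Λ ^ (r-q)) * Λ ^ (q+1) := by ring
      exact le_of_mul_le_mul_right h2 hq1pos
    have hc : ContinuousAt (fun x : ℝ => x ^ (r-q)) 0 :=
      Real.continuousAt_rpow_const 0 (r-q) (Or.inr (by linarith))
    have ht0 : Tendsto (fun x : ℝ => x ^ (r-q)) (nhdsWithin (0:ℝ) (Set.Ioi 0)) (nhds 0) := by
      have := hc.tendsto
      rw [Real.zero_rpow (by linarith : r - q ≠ 0)] at this
      exact this.mono_left nhdsWithin_le_nhds
    have htend : Tendsto (fun Λ : ℝ => (a+ε)/(r+1) * Λ ^ (r-q))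
        (nhdsWithin (0:ℝ) (Set.Ioi 0)) (nhds 0) := by
      have := ht0.const_mul ((a+ε)/(r+1))
      rwa [mul_zero] at this
    have hle : (b-ε)/(q+1) ≤ 0 := ge_of_tendsto htend hev2
    have hpos : 0 < (b-ε)/(q+1) := div_pos (by simp only [hεdef]; linarith) hq1
    linarith
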